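/- Let D ⊆ ℝ^d, θ ∈ ℝ^d, Γ ∈ ℝ^{m×d}, τ ∈ ℝ^m. If there exists a finitely supported probability measure π on D with E_{x∼π}[Γx] ≤ τ achieving the supremum of E_{x∼π}[θᵀx] over all such measures, then there exists an optimal finitely supported feasible probability measure π* whose support has at most m+1 points. -/
import Mathlib


open Matrix


lemma reduce_support {d m : ℕ} (D : Set (Fin d → ℝ)) (θ : Fin d → ℝ)
    (Γ : Matrix (Fin m) (Fin d) ℝ) (τ : Fin m → ℝ) :
    ∀ n (t : Finset (Fin d → ℝ)) (w : (Fin d → ℝ) → ℝ),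
      t.card ≤ n → ↑t ⊆ D → (∀ x ∈ t, 0 ≤ w x) → ∑ x ∈ t, w x = 1 →
      (∀ j, (∑ x ∈ t, w x • Γ.mulVec x) j ≤ τ j) →
      ∃ (t' : Finset (Fin d → ℝ)) (w' : (Fin d → ℝ) → ℝ),
        ↑t' ⊆ D ∧ (∀ x ∈ t', 0 ≤ w' x) ∧ (∑ x ∈ t', w' x = 1) ∧
        (∀ j, (∑ x ∈ t', w' x • Γ.mulVec x) j ≤ τ j) ∧ t'.card ≤ m + 1 ∧
        ∑ x ∈ t, w x • (θ ⬝ᵥ x) ≤ ∑ x ∈ t', w' x • (θ ⬝ᵥ x) := by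
  intro n
  induction n with
  | zero =>
    intro t w hcard _ _ hsum _
    exfalso
    have : t = ∅ := Finset.card_eq_zero.mp (Nat.le_zero.mp hcard)
    rw [this] at hsum; simp at hsum
  | succ n ih =>
    intro t w hcard hsub hnn hsum hfeas
    by_cases hle : t.card ≤ m + 1
    · exact ⟨t, w, hsub, hnn, hsum, hfeas, hle, le_refl _⟩
    push_neg at hle
    -- the vectors (1, Γx) for x ∈ t are linearly dependent
    set u : ↥t → (Fin (m + 1) → ℝ) := fun x => Fin.cons 1 (Γ.mulVec x) with hu
    have hdep : ¬ LinearIndependent ℝ u := by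
      intro h
      have := h.fintype_card_le_finrank
      rw [Fintype.card_coe, Module.finrank_fin_fun] at this
      omega
    obtain ⟨g, hg0, i₀, hgi₀⟩ := Fintype.not_linearIndependent_iff.mp hdep
    -- possibly negate so the objective direction is nonnegative
    set σ : ℝ := if 0 ≤ ∑ i : ↥t, g i * (θ ⬝ᵥ (i : Fin d → ℝ)) then 1 else -1 with hσ
    have hσnz : σ ≠ 0 := by
      rcases ite_eq_or_eq (0 ≤ ∑ i : ↥t, g i * (θ ⬝ᵥ (i : Fin d → ℝ))) (1:ℝ) (-1) with h | h <;>
        rw [hσ, h] <;> norm_num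
    set c : (Fin d → ℝ) → ℝ := fun x => if hx : x ∈ t then σ * g ⟨x, hx⟩ else 0 with hc
    have hcmem : ∀ i : ↥t, c i = σ * g i := by
      intro i; simp [hc, i.2]
    have hsum_c_eq : ∀ f : (Fin d → ℝ) → ℝ,
        ∑ x ∈ t, c x * f x = σ * ∑ i : ↥t, g i * f i := by
      intro f
      rw [← Finset.sum_coe_sort t (fun x => c x * f x), Finset.mul_sum]
      exact Finset.sum_congr rfl fun i _ => by rw [hcmem i]; ring
    -- key relations
    have hrel0 : ∑ x ∈ t, c x = 0 := by
      have h0 := congrFun hg0 0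
      rw [Finset.sum_apply] at h0
      simp only [Pi.smul_apply, hu, Fin.cons_zero, smul_eq_mul, mul_one, Pi.zero_apply] at h0
      have h1 := hsum_c_eq (fun _ => 1)
      simp only [mul_one] at h1
      rw [h1, h0, mul_zero]
    have hrelΓ : ∀ j, ∑ x ∈ t, c x * (Γ.mulVec x) j = 0 := by
      intro j
      have h0 := congrFun hg0 j.succ
      rw [Finset.sum_apply] at h0
      simp only [Pi.smul_apply, hu, Fin.cons_succ, smul_eq_mul, Pi.zero_apply] at h0
      rw [hsum_c_eq (fun x => (Γ.mulVec x) j), h0, mul_zero]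
    have hrelθ : 0 ≤ ∑ x ∈ t, c x * (θ ⬝ᵥ x) := by
      rw [hsum_c_eq (fun x => θ ⬝ᵥ x)]
      rcases le_or_gt 0 (∑ i : ↥t, g i * (θ ⬝ᵥ (i : Fin d → ℝ))) with h | h
      · have hσ1 : σ = 1 := by rw [hσ, if_pos h]
        rw [hσ1, one_mul]; exact h
      · have hσ1 : σ = -1 := by rw [hσ, if_neg (not_le.mpr h)]
        rw [hσ1]; nlinarith
    -- some point has negative coefficient
    have hneg : ∃ x ∈ t, c x < 0 := by
      by_contra hno
      push_neg at hno
      have hz := (Finset.sum_eq_zero_iff_of_nonneg hno).mp hrel0 i₀ i₀.2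
      rw [hcmem ⟨i₀, i₀.2⟩] at hz
      rcases mul_eq_zero.mp hz with h | h
      · exact hσnz h
      · exact hgi₀ (by simpa using h)
    set tneg : Finset (Fin d → ℝ) := t.filter (fun x => c x < 0) with htneg
    have htneg_ne : tneg.Nonempty := by
      obtain ⟨x, hx, hcx⟩ := hneg
      exact ⟨x, Finset.mem_filter.mpr ⟨hx, hcx⟩⟩
    obtain ⟨x₀, hx₀mem, hx₀min⟩ :=
      Finset.exists_min_image tneg (fun x => w x / (-c x)) htneg_ne
    have hx₀t : x₀ ∈ t := (Finset.mem_filter.mp hx₀mem).1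
    have hcx₀ : c x₀ < 0 := (Finset.mem_filter.mp hx₀mem).2
    set s : ℝ := w x₀ / (-c x₀) with hs
    have hs0 : 0 ≤ s := div_nonneg (hnn x₀ hx₀t) (by linarith)
    set w' : (Fin d → ℝ) → ℝ := fun x => w x + s * c x with hw'
    have hne₀ : c x₀ ≠ 0 := ne_of_lt hcx₀
    have hw'x₀ : w' x₀ = 0 := by
      have key : s * c x₀ = -w x₀ := by
        rw [hs, div_mul_eq_mul_div, div_eq_iff (neg_ne_zero.mpr hne₀)]; ring
      simp only [hw']; linarith
    have hw'nn : ∀ x ∈ t, 0 ≤ w' x := by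
      intro x hx
      rcases le_or_gt 0 (c x) with h | h
      · have h1 : 0 ≤ s * c x := mul_nonneg hs0 h
        have h2 := hnn x hx
        simp only [hw']; linarith
      · have hxneg : x ∈ tneg := Finset.mem_filter.mpr ⟨hx, h⟩
        have hmin := hx₀min x hxneg
        have hpos : 0 < -c x := by linarith
        have h3 : s ≤ w x / (-c x) := hmin
        have h4 : s * (-c x) ≤ w x := (le_div_iff₀ hpos).mp h3
        simp only [hw']; nlinarith
    -- sums under the new weights
    have hsum' : ∑ x ∈ t, w' x = 1 := by
      simp only [hw', Finset.sum_add_distrib, ← Finset.mul_sum, hrel0, mul_zero, add_zero, hsum]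
    have hfeas' : ∀ j, (∑ x ∈ t, w' x • Γ.mulVec x) j ≤ τ j := by
      intro j
      have hformula : ∀ v : (Fin d → ℝ) → ℝ,
          (∑ x ∈ t, v x • Γ.mulVec x) j = ∑ x ∈ t, v x * (Γ.mulVec x) j := by
        intro v; rw [Finset.sum_apply]; simp
      rw [hformula]
      have : ∑ x ∈ t, w' x * (Γ.mulVec x) j
          = ∑ x ∈ t, w x * (Γ.mulVec x) j + s * ∑ x ∈ t, c x * (Γ.mulVec x) j := by
        rw [Finset.mul_sum, ← Finset.sum_add_distrib]
        exact Finset.sum_congr rfl fun x _ => by simp only [hw']; ring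
      rw [this, hrelΓ j, mul_zero, add_zero, ← hformula]
      exact hfeas j
    have hobj' : ∑ x ∈ t, w x • (θ ⬝ᵥ x) ≤ ∑ x ∈ t, w' x • (θ ⬝ᵥ x) := by
      have : ∑ x ∈ t, w' x • (θ ⬝ᵥ x)
          = ∑ x ∈ t, w x • (θ ⬝ᵥ x) + s * ∑ x ∈ t, c x * (θ ⬝ᵥ x) := by
        rw [Finset.mul_sum, ← Finset.sum_add_distrib]
        exact Finset.sum_congr rfl fun x _ => by simp only [hw', smul_eq_mul]; ring
      rw [this]
      nlinarith [mul_nonneg hs0 hrelθ]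
    -- erase x₀ and recurse
    have hcard' : (t.erase x₀).card ≤ n := by
      have := Finset.card_erase_of_mem hx₀t
      omega
    have herase : ∀ f : (Fin d → ℝ) → ℝ,
        ∑ x ∈ t.erase x₀, w' x • f x = ∑ x ∈ t, w' x • f x := by
      intro f
      exact Finset.sum_erase t (by rw [hw'x₀]; simp)
    have herase' : ∑ x ∈ t.erase x₀, w' x = 1 := by
      rw [Finset.sum_erase t (by rw [hw'x₀])]; exact hsum'
    obtain ⟨t'', w'', h1, h2, h3, h4, h5, h6⟩ :=
      ih (t.erase x₀) w' hcard'
        (Set.Subset.trans (by exact_mod_cast Finset.erase_subset x₀ t) hsub)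
        (fun x hx => hw'nn x (Finset.mem_of_mem_erase hx)) herase'
        (fun j => by rw [show (∑ x ∈ t.erase x₀, w' x • Γ.mulVec x) = ∑ x ∈ t, w' x • Γ.mulVec x
          from Finset.sum_erase t (by rw [hw'x₀]; simp)]; exact hfeas' j)
    refine ⟨t'', w'', h1, h2, h3, h4, h5, ?_⟩
    calc ∑ x ∈ t, w x • (θ ⬝ᵥ x) ≤ ∑ x ∈ t, w' x • (θ ⬝ᵥ x) := hobj'
      _ = ∑ x ∈ t.erase x₀, w' x • (θ ⬝ᵥ x) := (herase _).symm
      _ ≤ ∑ x ∈ t'', w'' x • (θ ⬝ᵥ x) := h6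

/-- If some finitely supported feasible policy is optimal, then there exists an
optimal feasible policy supported on at most `m + 1` points. A policy is a pair
`(t, w)` of a finite support `t ⊆ D` and weights `w` that are nonnegative on `t`
and sum to one; feasibility means `∑ x ∈ t, w x • Γx ≤ τ` componentwise. -/
theorem optimal_policy_small_support {d m : ℕ} (D : Set (Fin d → ℝ))
    (θ : Fin d → ℝ) (Γ : Matrix (Fin m) (Fin d) ℝ) (τ : Fin m → ℝ)
    (policy : Finset (Fin d → ℝ) → ((Fin d → ℝ) → ℝ) → Prop)
    (hpolicy : ∀ t w, policy t w ↔
      (↑t ⊆ D ∧ (∀ x ∈ t, 0 ≤ w x) ∧ ∑ x ∈ t, w x = 1 ∧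
        ∀ j, (∑ x ∈ t, w x • Γ.mulVec x) j ≤ τ j))
    (hopt : ∃ t w, policy t w ∧
      ∀ t' w', policy t' w' →
        ∑ x ∈ t', w' x • (θ ⬝ᵥ x) ≤ ∑ x ∈ t, w x • (θ ⬝ᵥ x)) :
    ∃ t w, policy t w ∧ t.card ≤ m + 1 ∧
      ∀ t' w', policy t' w' →
        ∑ x ∈ t', w' x • (θ ⬝ᵥ x) ≤ ∑ x ∈ t, w x • (θ ⬝ᵥ x) := by
  obtain ⟨t₀, w₀, hp₀, hmax⟩ := hopt
  obtain ⟨hsub₀, hnn₀, hsum₀, hfeas₀⟩ := (hpolicy t₀ w₀).mp hp₀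
  obtain ⟨t, w, hsub, hnn, hsum, hfeas, hcard, hobj⟩ :=
    reduce_support D θ Γ τ t₀.card t₀ w₀ le_rfl hsub₀ hnn₀ hsum₀ hfeas₀
  refine ⟨t, w, (hpolicy t w).mpr ⟨hsub, hnn, hsum, hfeas⟩, hcard, ?_⟩
  intro t' w' hp'
  exact le_trans (hmax t' w' hp') hobj
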